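/- Let λ₁,…,λₙ be distinct elements of a field of characteristic zero, 0 < k < n, and let P(x₁,…,x_k) and Q(y₁,…,y_{n−k}) be symmetric polynomials with deg P + deg Q ≤ k(n−k). Then ∑_{I⊂[n],|I|=k} P(λ_I)Q(λ_{Iᶜ}) / ∏_{i∈I}∏_{j∈Iᶜ}(λ_i−λ_j) = d(k,n)/(k!(n−k)!), where d(k,n) is the coefficient of x₁^{n−1}⋯x_k^{n−1}y₁^{n−1}⋯y_{n−k}^{n−1} in P(x)Q(y)·∏_{i=1}^k∏_{j≠i}(x_i−x_j)·∏_{i=1}^{n−k}∏_{j≠i}(y_i−y_j)·∏_{i=1}^{n−k}∏_{j=1}^k(y_i−x_j). -/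

import Mathlib

open Finset MvPolynomial

set_option linter.unusedSectionVars false

open Finset MvPolynomial Equiv

namespace DSym

noncomputable section

variable (F : Type*) [Field F] [CharZero F]

def dl (n : ℕ) : Fin n →₀ ℕ := Finsupp.equivFunOnFinite.symm (fun i => (i : ℕ))
@[simp] lemma dl_apply (n : ℕ) (i : Fin n) : dl n i = (i : ℕ) := rfl
def Dmon (n : ℕ) (σ : Equiv.Perm (Fin n)) : Fin n →₀ ℕ := Finsupp.mapDomain σ (dl n)
@[simp] lemma Dmon_apply (n : ℕ) (σ : Equiv.Perm (Fin n)) (i : Fin n) :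
    Dmon n σ i = ((σ⁻¹ i : Fin n) : ℕ) := by
  simp [Dmon, Finsupp.mapDomain_equiv_apply]
def sgn {n : ℕ} (σ : Equiv.Perm (Fin n)) : F := ((Equiv.Perm.sign σ : ℤ) : F)
@[simp] lemma sgn_mul {n : ℕ} (σ τ : Equiv.Perm (Fin n)) :
    sgn F (σ * τ) = sgn F σ * sgn F τ := by simp [sgn]
@[simp] lemma sgn_inv {n : ℕ} (σ : Equiv.Perm (Fin n)) : sgn F σ⁻¹ = sgn F σ := by simp [sgn]
@[simp] lemma sgn_mul_self {n : ℕ} (σ : Equiv.Perm (Fin n)) : sgn F σ * sgn F σ = 1 := by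
  rcases Int.units_eq_one_or (Equiv.Perm.sign σ) with h | h <;> simp [sgn, h]
lemma sgn_ne_zero {n : ℕ} (σ : Equiv.Perm (Fin n)) : sgn F σ ≠ 0 := by
  rcases Int.units_eq_one_or (Equiv.Perm.sign σ) with h | h <;> simp [sgn, h]
def VV (n : ℕ) : MvPolynomial (Fin n) F :=
  ∑ σ : Equiv.Perm (Fin n), monomial (Dmon n σ) (sgn F σ)

variable {F}

-- rename of VV
lemma Dmon_mul (n : ℕ) (π σ : Equiv.Perm (Fin n)) :
    Finsupp.mapDomain (⇑π) (Dmon n σ) = Dmon n (π * σ) := by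
  rw [Dmon, Dmon, ← Finsupp.mapDomain_comp]
  rfl

lemma rename_VV (n : ℕ) (π : Equiv.Perm (Fin n)) :
    rename (⇑π) (VV F n) = sgn F π • VV F n := by
  rw [VV, map_sum, Finset.smul_sum]
  rw [← Equiv.sum_comp (Equiv.mulLeft π)
    (fun τ => sgn F π • (monomial (Dmon n τ)) (sgn F τ))]
  apply Finset.sum_congr rfl
  intro σ _
  rw [rename_monomial, Dmon_mul, smul_monomial]
  simp only [Equiv.coe_mulLeft, sgn_mul, smul_eq_mul]
  congr 1
  rw [← mul_assoc, sgn_mul_self, one_mul]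

-- antisymmetry
def IsAnti {n : ℕ} (B : MvPolynomial (Fin n) F) : Prop :=
  ∀ π : Equiv.Perm (Fin n), rename (⇑π) B = sgn F π • B

lemma anti_VV (n : ℕ) : IsAnti (VV F n) := fun π => rename_VV n π

lemma IsAnti.coeff_rep_zero {n : ℕ} {B : MvPolynomial (Fin n) F} (hB : IsAnti B)
    {d : Fin n →₀ ℕ} {i j : Fin n} (hij : i ≠ j) (hd : d i = d j) : coeff d B = 0 := by
  have h1 : Finsupp.mapDomain (⇑(Equiv.swap i j)) d = d := by
    ext a
    rw [Finsupp.mapDomain_equiv_apply]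
    rcases eq_or_ne a i with rfl | hai
    · simp [Equiv.swap_apply_def, hd.symm]
    rcases eq_or_ne a j with rfl | haj
    · simp [Equiv.swap_apply_def, hd]
    · simp [Equiv.swap_apply_def, hai, haj]
  have h2 := coeff_rename_mapDomain (⇑(Equiv.swap i j)) (Equiv.injective _) B d
  rw [h1, hB, coeff_smul] at h2
  have hsgn : sgn F (Equiv.swap i j) = -1 := by
    simp [sgn, Equiv.Perm.sign_swap hij]
  rw [hsgn, smul_eq_mul] at h2
  have h3 : (2 : F) * coeff d B = 0 := by linear_combination -h2
  exact (mul_eq_zero.1 h3).resolve_left two_ne_zero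

lemma IsAnti.coeff_Dmon {n : ℕ} {B : MvPolynomial (Fin n) F} (hB : IsAnti B)
    (σ : Equiv.Perm (Fin n)) : coeff (Dmon n σ) B = sgn F σ * coeff (dl n) B := by
  have h2 := coeff_rename_mapDomain (⇑σ) (Equiv.injective _) B (dl n)
  rw [hB, coeff_smul, smul_eq_mul] at h2
  have := congrArg (fun x => sgn F σ * x) h2
  simp only [← mul_assoc, sgn_mul_self, one_mul] at this
  exact this

lemma Dmon_injective (n : ℕ) : Function.Injective (Dmon n) := by
  intro σ τ h
  have h2 : σ⁻¹ = τ⁻¹ := by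
    ext i
    have := DFunLike.congr_fun h i
    simpa using this
  simpa using congrArg (·⁻¹) h2

lemma coeff_VV_Dmon (n : ℕ) (σ : Equiv.Perm (Fin n)) :
    coeff (Dmon n σ) (VV F n) = sgn F σ := by
  rw [VV, coeff_sum, Finset.sum_eq_single σ]
  · simp [coeff_monomial]
  · intro τ _ hτ
    rw [coeff_monomial, if_neg (fun h => hτ (Dmon_injective n h))]
  · simp

lemma coeff_VV_eq_zero (n : ℕ) (d : Fin n →₀ ℕ) (hd : ∀ σ, d ≠ Dmon n σ) :
    coeff d (VV F n) = 0 := by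
  rw [VV, coeff_sum]
  apply Finset.sum_eq_zero
  intro τ _
  rw [coeff_monomial, if_neg (fun h => hd τ h.symm)]

lemma eval_VV (n : ℕ) (μ : Fin n → F) :
    eval μ (VV F n) = ∏ i : Fin n, ∏ j ∈ Ioi i, (μ j - μ i) := by
  rw [← Matrix.det_vandermonde, Matrix.det_apply', VV, map_sum]
  apply Finset.sum_congr rfl
  intro σ _
  rw [eval_monomial, Finsupp.prod_pow]
  have : ∏ i : Fin n, μ i ^ (Dmon n σ) i = ∏ i : Fin n, μ (σ i) ^ (i : ℕ) := by
    rw [← Equiv.prod_comp σ (fun i => μ i ^ ((Dmon n σ) i))]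
    apply Finset.prod_congr rfl
    intro i _
    simp
  rw [this]
  simp [sgn, Matrix.vandermonde_apply, Units.smul_def, zsmul_eq_mul]

-- degree of VV
lemma sum_Dmon (n : ℕ) (σ : Equiv.Perm (Fin n)) :
    ((Dmon n σ).sum fun _ e => e) = ∑ i : Fin n, (i : ℕ) := by
  rw [Finsupp.sum_fintype _ _ (fun _ => rfl)]
  rw [← Equiv.sum_comp σ⁻¹ (fun i : Fin n => (i : ℕ))]
  apply Finset.sum_congr rfl
  intro i _
  simp

lemma totalDegree_VV (n : ℕ) : (VV F n).totalDegree ≤ ∑ i : Fin n, (i : ℕ) := by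
  refine (totalDegree_finset_sum _ _).trans (Finset.sup_le ?_)
  intro σ _
  refine (totalDegree_monomial_le _ _).trans ?_
  exact le_of_eq (sum_Dmon n σ)

-- combinatorics
lemma strictMono_nat_le {m : ℕ} (f : Fin m → ℕ) (hf : StrictMono f) :
    ∀ v (h : v < m), v ≤ f ⟨v, h⟩ := by
  intro v
  induction v with
  | zero => intro h; exact Nat.zero_le _
  | succ w ih =>
    intro h
    have hw : w < m := Nat.lt_of_succ_lt h
    have h1 : f ⟨w, hw⟩ < f ⟨w + 1, h⟩ := hf (by simp [Fin.lt_def])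
    have := ih hw
    omega

lemma exists_perm_of_inj (n : ℕ) (d : Fin n →₀ ℕ)
    (hinj : Function.Injective (d : Fin n → ℕ))
    (hsum : (∑ i : Fin n, d i) ≤ ∑ i : Fin n, (i : ℕ)) : ∃ σ, d = Dmon n σ := by
  classical
  set s : Finset ℕ := Finset.image d Finset.univ with hs
  have hcard : s.card = n := by
    rw [hs, Finset.card_image_of_injective _ hinj, Finset.card_univ, Fintype.card_fin]
  set f := s.orderIsoOfFin hcard with hf
  have hmono : StrictMono (fun i => ((f i : ℕ))) := by
    intro a b hab
    exact Subtype.coe_lt_coe.2 (f.strictMono hab)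
  have hsum2 : (∑ i : Fin n, ((f i : ℕ))) = ∑ i : Fin n, d i := by
    calc (∑ i : Fin n, ((f i : ℕ))) = ∑ x : s, (x : ℕ) :=
          Equiv.sum_comp f.toEquiv (fun x : s => (x : ℕ))
      _ = ∑ x ∈ s, x := Finset.sum_coe_sort s (fun x => x)
      _ = ∑ i : Fin n, d i := by
          rw [hs]; exact Finset.sum_image (fun a _ b _ h => hinj h)
  have hle : ∀ i : Fin n, (i : ℕ) ≤ (f i : ℕ) := fun i =>
    strictMono_nat_le _ hmono i i.isLt
  have heq : ∀ i : Fin n, ((f i : ℕ)) = (i : ℕ) := by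
    have h1 : (∑ i : Fin n, (i : ℕ)) ≤ ∑ i : Fin n, ((f i : ℕ)) :=
      Finset.sum_le_sum (fun i _ => hle i)
    have h2 : (∑ i : Fin n, ((f i : ℕ))) = ∑ i : Fin n, (i : ℕ) := le_antisymm (hsum2 ▸ hsum) h1
    intro i
    by_contra hne
    have hlt : (i : ℕ) < (f i : ℕ) := lt_of_le_of_ne (hle i) (Ne.symm hne)
    have := Finset.sum_lt_sum (fun j (_ : j ∈ Finset.univ) => hle j) ⟨i, Finset.mem_univ i, hlt⟩
    omega
  have hdlt : ∀ i : Fin n, d i < n := by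
    intro i
    have hmem : d i ∈ s := by rw [hs]; exact Finset.mem_image_of_mem _ (Finset.mem_univ i)
    obtain ⟨j, hj⟩ := f.surjective ⟨d i, hmem⟩
    have : ((f j : ℕ)) = d i := by rw [hj]
    rw [heq j] at this
    omega
  set h : Fin n → Fin n := fun i => ⟨d i, hdlt i⟩ with hh
  have hhinj : Function.Injective h := by
    intro a b hab
    apply hinj
    have := congrArg Fin.val hab
    simpa [hh] using this
  have hbij : Function.Bijective h := Finite.injective_iff_bijective.1 hhinj
  refine ⟨(Equiv.ofBijective h hbij).symm, ?_⟩
  ext i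
  have : ((Equiv.ofBijective h hbij).symm)⁻¹ = Equiv.ofBijective h hbij := rfl
  rw [Dmon_apply, this]
  simp [Equiv.ofBijective, hh]

-- the structure theorem
lemma IsAnti.eq_smul_VV {n : ℕ} {B : MvPolynomial (Fin n) F} (hB : IsAnti B)
    (hdeg : B.totalDegree ≤ ∑ i : Fin n, (i : ℕ)) :
    B = coeff (dl n) B • VV F n := by
  apply MvPolynomial.ext
  intro d
  rw [coeff_smul, smul_eq_mul]
  by_cases hinj : Function.Injective (d : Fin n → ℕ)
  · by_cases hsum : (∑ i : Fin n, d i) ≤ ∑ i : Fin n, (i : ℕ)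
    · obtain ⟨σ, rfl⟩ := exists_perm_of_inj n d hinj hsum
      rw [hB.coeff_Dmon, coeff_VV_Dmon]
      ring
    · push_neg at hsum
      have hd : B.totalDegree < ∑ i ∈ d.support, d i := by
        have : (∑ i ∈ d.support, d i) = ∑ i : Fin n, d i := by
          rw [Finset.sum_subset (Finset.subset_univ _)]
          intro x _ hx
          simpa using hx
        omega
      rw [coeff_eq_zero_of_totalDegree_lt hd, coeff_VV_eq_zero, mul_zero]
      intro σ hσ
      have : (∑ i : Fin n, d i) = ∑ i : Fin n, (i : ℕ) := by
        rw [hσ]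
        have := sum_Dmon n σ
        rw [Finsupp.sum_fintype _ _ (fun _ => rfl)] at this
        exact this
      omega
  · rw [Function.not_injective_iff] at hinj
    obtain ⟨i, j, hd, hij⟩ := hinj
    rw [hB.coeff_rep_zero hij hd, coeff_VV_eq_zero, mul_zero]
    intro σ hσ
    apply hij
    have hi : ((σ⁻¹ i : Fin n) : ℕ) = ((σ⁻¹ j : Fin n) : ℕ) := by
      have h1 := congrArg (fun (x : Fin n →₀ ℕ) => x i) hσ
      have h2 := congrArg (fun (x : Fin n →₀ ℕ) => x j) hσ
      simp at h1 h2
      exact h1.symm.trans (hd.trans h2)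
    have : σ⁻¹ i = σ⁻¹ j := Fin.ext hi
    exact σ⁻¹.injective this


-- ## product toolkit
section Products

variable {F : Type*} [Field F] [CharZero F]

lemma prod_Ioi_eq_prod_if {n : ℕ} (f : Fin n → Fin n → F) :
    (∏ i : Fin n, ∏ j ∈ Ioi i, f i j)
      = ∏ i : Fin n, ∏ j : Fin n, if i < j then f i j else 1 := by
  apply Finset.prod_congr rfl
  intro i _
  rw [← Finset.prod_filter]
  apply Finset.prod_congr _ (fun _ _ => rfl)
  ext j
  simp

def SK (F : Type*) [Field F] (k : ℕ) : F :=
  ∏ a : Fin k, ∏ b : Fin k, if a < b then (-1 : F) else 1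

lemma SK_mul_SK (k : ℕ) : SK F k * SK F k = 1 := by
  rw [SK, ← Finset.prod_mul_distrib]
  rw [Finset.prod_congr rfl (fun a _ => (Finset.prod_mul_distrib).symm)]
  apply Finset.prod_eq_one
  intro a _
  apply Finset.prod_eq_one
  intro b _
  split <;> norm_num

lemma split_prod {n k m : ℕ} (e : Fin k ⊕ Fin m ≃ Fin n)
    (hvl : ∀ a : Fin k, ((e (Sum.inl a)) : ℕ) = (a : ℕ))
    (hvr : ∀ b : Fin m, ((e (Sum.inr b)) : ℕ) = k + (b : ℕ))
    (f : Fin n → Fin n → F) :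
    (∏ i : Fin n, ∏ j : Fin n, if i < j then f i j else 1)
      = ((∏ a : Fin k, ∏ b : Fin k, if a < b then f (e (Sum.inl a)) (e (Sum.inl b)) else 1)
          * ∏ a : Fin m, ∏ b : Fin m, if a < b then f (e (Sum.inr a)) (e (Sum.inr b)) else 1)
        * ∏ a : Fin k, ∏ b : Fin m, f (e (Sum.inl a)) (e (Sum.inr b)) := by
  have hll : ∀ (a b : Fin k), (e (Sum.inl a) < e (Sum.inl b)) ↔ a < b := by
    intro a b; rw [Fin.lt_def, Fin.lt_def, hvl, hvl]
  have hrr : ∀ (a b : Fin m), (e (Sum.inr a) < e (Sum.inr b)) ↔ a < b := by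
    intro a b; rw [Fin.lt_def, Fin.lt_def, hvr, hvr]; omega
  have hlr : ∀ (a : Fin k) (b : Fin m), e (Sum.inl a) < e (Sum.inr b) := by
    intro a b; rw [Fin.lt_def, hvl, hvr]; omega
  have hrl : ∀ (b : Fin m) (a : Fin k), ¬ (e (Sum.inr b) < e (Sum.inl a)) := by
    intro b a; rw [Fin.lt_def, hvl, hvr]; omega
  rw [← Equiv.prod_comp e (fun i => ∏ j : Fin n, if i < j then f i j else 1)]
  have inner : ∀ x : Fin k ⊕ Fin m, (∏ j : Fin n, if e x < j then f (e x) j else 1)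
      = ∏ y : Fin k ⊕ Fin m, if e x < e y then f (e x) (e y) else 1 := by
    intro x
    rw [← Equiv.prod_comp e (fun j => if e x < j then f (e x) j else 1)]
  rw [Finset.prod_congr rfl (fun x _ => inner x), Fintype.prod_sum_type]
  simp only [Fintype.prod_sum_type]
  have h1 : ∀ a : Fin k,
      (∏ b : Fin k, if e (Sum.inl a) < e (Sum.inl b) then f (e (Sum.inl a)) (e (Sum.inl b)) else 1)
      = ∏ b : Fin k, if a < b then f (e (Sum.inl a)) (e (Sum.inl b)) else 1 := by
    intro a; exact Finset.prod_congr rfl (fun b _ => by rw [if_congr (hll a b) rfl rfl])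
  have h2 : ∀ a : Fin k,
      (∏ b : Fin m, if e (Sum.inl a) < e (Sum.inr b) then f (e (Sum.inl a)) (e (Sum.inr b)) else 1)
      = ∏ b : Fin m, f (e (Sum.inl a)) (e (Sum.inr b)) := by
    intro a; exact Finset.prod_congr rfl (fun b _ => by rw [if_pos (hlr a b)])
  have h3 : ∀ a : Fin m,
      (∏ b : Fin k, if e (Sum.inr a) < e (Sum.inl b) then f (e (Sum.inr a)) (e (Sum.inl b)) else 1)
      = 1 := by
    intro a; exact Finset.prod_eq_one (fun b _ => by rw [if_neg (hrl a b)])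
  have h4 : ∀ a : Fin m,
      (∏ b : Fin m, if e (Sum.inr a) < e (Sum.inr b) then f (e (Sum.inr a)) (e (Sum.inr b)) else 1)
      = ∏ b : Fin m, if a < b then f (e (Sum.inr a)) (e (Sum.inr b)) else 1 := by
    intro a; exact Finset.prod_congr rfl (fun b _ => by rw [if_congr (hrr a b) rfl rfl])
  simp only [hll, hrr, hlr, hrl, if_true, if_false, ite_true, ite_false,
    Finset.prod_const_one, one_mul]
  rw [Finset.prod_mul_distrib]
  ring

lemma SK_split {n k m : ℕ} (e : Fin k ⊕ Fin m ≃ Fin n)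
    (hvl : ∀ a : Fin k, ((e (Sum.inl a)) : ℕ) = (a : ℕ))
    (hvr : ∀ b : Fin m, ((e (Sum.inr b)) : ℕ) = k + (b : ℕ)) :
    SK F n = (SK F k * SK F m) * (-1 : F) ^ (k * m) := by
  have := split_prod e hvl hvr (fun _ _ => (-1 : F))
  rw [SK, SK, SK, this]
  congr 1
  rw [Finset.prod_const, Finset.prod_const, Finset.card_univ, Finset.card_univ,
    Fintype.card_fin, Fintype.card_fin, ← pow_mul, Nat.mul_comm]

lemma erase_prod {k : ℕ} (x : Fin k → F) :
    (∏ i : Fin k, ∏ j ∈ Finset.univ.erase i, (x i - x j))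
      = SK F k * ((∏ i : Fin k, ∏ j : Fin k, if i < j then (x j - x i) else 1)
          * ∏ i : Fin k, ∏ j : Fin k, if i < j then (x j - x i) else 1) := by
  have step1 : (∏ i : Fin k, ∏ j ∈ Finset.univ.erase i, (x i - x j))
      = ∏ i : Fin k, ∏ j : Fin k, (if i < j then (x i - x j) else 1) * (if j < i then (x i - x j) else 1) := by
    apply Finset.prod_congr rfl
    intro i _
    rw [← Finset.filter_ne Finset.univ i, Finset.prod_filter]
    apply Finset.prod_congr rfl
    intro j _
    rcases lt_trichotomy i j with h | h | h
    · rw [if_pos (by omega : i ≠ j), if_pos h, if_neg (by omega : ¬ j < i), mul_one]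
    · rw [if_neg (by omega : ¬ i ≠ j), if_neg (by omega : ¬ i < j), if_neg (by omega : ¬ j < i), mul_one]
    · rw [if_pos (by omega : i ≠ j), if_neg (by omega : ¬ i < j), if_pos h, one_mul]
  rw [step1]
  rw [Finset.prod_congr rfl (fun i _ => Finset.prod_mul_distrib), Finset.prod_mul_distrib]
  have hB : (∏ i : Fin k, ∏ j : Fin k, if j < i then (x i - x j) else 1)
      = ∏ i : Fin k, ∏ j : Fin k, if i < j then (x j - x i) else 1 := Finset.prod_comm
  have hA : (∏ i : Fin k, ∏ j : Fin k, if i < j then (x i - x j) else 1)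
      = SK F k * ∏ i : Fin k, ∏ j : Fin k, if i < j then (x j - x i) else 1 := by
    rw [SK, ← Finset.prod_mul_distrib]
    rw [Finset.prod_congr rfl (fun i _ => (Finset.prod_mul_distrib).symm)]
    apply Finset.prod_congr rfl
    intro i _
    apply Finset.prod_congr rfl
    intro j _
    split
    · ring
    · ring
  rw [hA, hB]
  ring

end Products

-- ## grouping bijection
section Grouping

variable {F : Type*} [Field F] [CharZero F]
variable {n k m : ℕ}

lemma compl_card (hkm : k + m = n) (I : {s : Finset (Fin n) // s.card = k}) :
    I.1ᶜ.card = m := by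
  rw [Finset.card_compl, I.2, Fintype.card_fin]
  omega

noncomputable def uI (hkm : k + m = n) (I : {s : Finset (Fin n) // s.card = k}) :
    (Fin k ⊕ Fin m) ≃ Fin n :=
  Equiv.ofBijective
    (Sum.elim (fun a => I.1.orderEmbOfFin I.2 a)
      (fun b => I.1ᶜ.orderEmbOfFin (compl_card hkm I) b))
    (by
      rw [Fintype.bijective_iff_injective_and_card]
      constructor
      · intro x y h
        match x, y with
        | Sum.inl a, Sum.inl b =>
          simp only [Sum.elim_inl] at h
          exact congrArg Sum.inl ((I.1.orderEmbOfFin I.2).injective h)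
        | Sum.inl a, Sum.inr b =>
          exfalso
          simp only [Sum.elim_inl, Sum.elim_inr] at h
          have h1 := Finset.orderEmbOfFin_mem I.1 I.2 a
          have h2 := Finset.orderEmbOfFin_mem I.1ᶜ (compl_card hkm I) b
          rw [h] at h1
          rw [Finset.mem_compl] at h2
          exact h2 h1
        | Sum.inr a, Sum.inl b =>
          exfalso
          simp only [Sum.elim_inl, Sum.elim_inr] at h
          have h1 := Finset.orderEmbOfFin_mem I.1 I.2 b
          have h2 := Finset.orderEmbOfFin_mem I.1ᶜ (compl_card hkm I) a
          rw [← h] at h1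
          rw [Finset.mem_compl] at h2
          exact h2 h1
        | Sum.inr a, Sum.inr b =>
          simp only [Sum.elim_inr] at h
          exact congrArg Sum.inr ((I.1ᶜ.orderEmbOfFin (compl_card hkm I)).injective h)
      · simp [hkm])

@[simp] lemma uI_inl (hkm : k + m = n) (I : {s : Finset (Fin n) // s.card = k}) (a : Fin k) :
    uI hkm I (Sum.inl a) = I.1.orderEmbOfFin I.2 a := rfl

@[simp] lemma uI_inr (hkm : k + m = n) (I : {s : Finset (Fin n) // s.card = k}) (b : Fin m) :
    uI hkm I (Sum.inr b) = I.1ᶜ.orderEmbOfFin (compl_card hkm I) b := rfl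

noncomputable def Phi (hkm : k + m = n) (e : (Fin k ⊕ Fin m) ≃ Fin n)
    (t : {s : Finset (Fin n) // s.card = k} × Equiv.Perm (Fin k) × Equiv.Perm (Fin m)) :
    Equiv.Perm (Fin n) :=
  e.symm.trans ((Equiv.sumCongr t.2.1 t.2.2).trans (uI hkm t.1))

lemma Phi_apply_inl (hkm : k + m = n) (e : (Fin k ⊕ Fin m) ≃ Fin n)
    (t : {s : Finset (Fin n) // s.card = k} × Equiv.Perm (Fin k) × Equiv.Perm (Fin m))
    (a : Fin k) :
    Phi hkm e t (e (Sum.inl a)) = t.1.1.orderEmbOfFin t.1.2 (t.2.1 a) := by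
  simp [Phi]

lemma Phi_apply_inr (hkm : k + m = n) (e : (Fin k ⊕ Fin m) ≃ Fin n)
    (t : {s : Finset (Fin n) // s.card = k} × Equiv.Perm (Fin k) × Equiv.Perm (Fin m))
    (b : Fin m) :
    Phi hkm e t (e (Sum.inr b)) = t.1.1ᶜ.orderEmbOfFin (compl_card hkm t.1) (t.2.2 b) := by
  simp [Phi]

lemma image_orderEmbOfFin_perm (I : {s : Finset (Fin n) // s.card = k}) (τ : Equiv.Perm (Fin k)) :
    Finset.image (fun a => I.1.orderEmbOfFin I.2 (τ a)) Finset.univ = I.1 := by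
  apply Finset.coe_injective
  rw [Finset.coe_image, Finset.coe_univ, Set.image_univ]
  have : Set.range (fun a => I.1.orderEmbOfFin I.2 (τ a))
      = Set.range (fun a => I.1.orderEmbOfFin I.2 a) := by
    apply Set.range_comp_subset_range (τ : Fin k → Fin k) (I.1.orderEmbOfFin I.2) |>.antisymm ?_
    intro x hx
    obtain ⟨a, ha⟩ := hx
    exact ⟨τ⁻¹ a, by simpa using ha⟩
  rw [this]
  exact I.1.range_orderEmbOfFin I.2

lemma Phi_bijective (hkm : k + m = n) (e : (Fin k ⊕ Fin m) ≃ Fin n) :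
    Function.Bijective (Phi hkm e) := by
  rw [Fintype.bijective_iff_injective_and_card]
  constructor
  · rintro ⟨I, τ, ρ⟩ ⟨I', τ', ρ'⟩ h
    have hII : I = I' := by
      apply Subtype.ext
      have h1 := image_orderEmbOfFin_perm I τ
      have h2 := image_orderEmbOfFin_perm I' τ'
      rw [← h1, ← h2]
      apply Finset.image_congr
      intro a _
      have h3 := DFunLike.congr_fun h (e (Sum.inl a))
      rw [Phi_apply_inl, Phi_apply_inl] at h3
      exact h3
    obtain ⟨I, hI⟩ := I
    obtain ⟨I', hI'⟩ := I'
    obtain rfl : I = I' := congrArg Subtype.val hII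
    have hττ : τ = τ' := by
      ext a
      have h3 := DFunLike.congr_fun h (e (Sum.inl a))
      rw [Phi_apply_inl, Phi_apply_inl] at h3
      exact congrArg Fin.val ((I.orderEmbOfFin hI).injective h3)
    have hρρ : ρ = ρ' := by
      ext b
      have h3 := DFunLike.congr_fun h (e (Sum.inr b))
      rw [Phi_apply_inr, Phi_apply_inr] at h3
      exact congrArg Fin.val ((Iᶜ.orderEmbOfFin _).injective h3)
    rw [hττ, hρρ]
  · simp only [Fintype.card_prod, Fintype.card_perm, Fintype.card_finset_len, Fintype.card_fin]
    have hkn : k ≤ n := by omega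
    have hm : n - k = m := by omega
    have := Nat.choose_mul_factorial_mul_factorial hkn
    rw [hm] at this
    rw [← this]
    ring

lemma Phi_decomp (hkm : k + m = n) (e : (Fin k ⊕ Fin m) ≃ Fin n)
    (I : {s : Finset (Fin n) // s.card = k}) (τ : Equiv.Perm (Fin k)) (ρ : Equiv.Perm (Fin m)) :
    Phi hkm e (I, τ, ρ)
      = Phi hkm e (I, 1, 1) * (e.symm.trans ((Equiv.sumCongr τ ρ).trans e)) := by
  ext x
  simp [Phi, Equiv.Perm.mul_apply]

lemma sgn_Phi (hkm : k + m = n) (e : (Fin k ⊕ Fin m) ≃ Fin n)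
    (I : {s : Finset (Fin n) // s.card = k}) (τ : Equiv.Perm (Fin k)) (ρ : Equiv.Perm (Fin m)) :
    sgn F (Phi hkm e (I, τ, ρ)) = sgn F (Phi hkm e (I, 1, 1)) * sgn F τ * sgn F ρ := by
  rw [Phi_decomp, sgn_mul]
  have hconj : (e.symm.trans ((Equiv.sumCongr τ ρ).trans e)) = e.permCongr (Equiv.sumCongr τ ρ) := by
    ext x
    simp [Equiv.permCongr]
  have : Equiv.Perm.sign (e.symm.trans ((Equiv.sumCongr τ ρ).trans e))
      = Equiv.Perm.sign τ * Equiv.Perm.sign ρ := by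
    rw [hconj, Equiv.Perm.sign_permCongr, Equiv.Perm.sign_sumCongr]
  rw [mul_assoc]
  congr 1
  rw [sgn, sgn, sgn, this]
  push_cast
  ring

end Grouping

-- ## the big antisymmetrized polynomial
section Main

variable {F : Type*} [Field F] [CharZero F]
variable {n k m : ℕ}

def Rpoly (P : MvPolynomial (Fin k) F) (Q : MvPolynomial (Fin m) F) :
    MvPolynomial (Fin k ⊕ Fin m) F :=
  rename Sum.inl P * rename Sum.inr Q * rename Sum.inl (VV F k) * rename Sum.inr (VV F m)

def Apoly (e : (Fin k ⊕ Fin m) ≃ Fin n) (P : MvPolynomial (Fin k) F)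
    (Q : MvPolynomial (Fin m) F) : MvPolynomial (Fin n) F :=
  ∑ σ : Equiv.Perm (Fin n), sgn F σ • rename ⇑σ (rename ⇑e (Rpoly P Q))

lemma anti_Apoly (e : (Fin k ⊕ Fin m) ≃ Fin n) (P : MvPolynomial (Fin k) F)
    (Q : MvPolynomial (Fin m) F) : IsAnti (Apoly e P Q) := by
  intro π
  rw [Apoly, map_sum, Finset.smul_sum]
  rw [← Equiv.sum_comp (Equiv.mulLeft π)
    (fun τ => sgn F π • (sgn F τ • rename ⇑τ (rename ⇑e (Rpoly P Q))))]
  apply Finset.sum_congr rfl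
  intro σ _
  rw [map_smul, rename_rename]
  simp only [Equiv.coe_mulLeft, smul_smul]
  have h1 : ⇑π ∘ ⇑σ = ⇑(π * σ) := rfl
  rw [h1]
  congr 1
  rw [sgn_mul, ← mul_assoc, sgn_mul_self, one_mul]

lemma gauss_aux : ∀ K M : ℕ, (∑ i ∈ Finset.range K, i) + (∑ i ∈ Finset.range M, i) + K * M
    = ∑ i ∈ Finset.range (K + M), i := by
  intro K M
  induction M with
  | zero => simp
  | succ M ih =>
    rw [Finset.sum_range_succ, Nat.mul_succ,
      show K + (M + 1) = (K + M) + 1 by omega, Finset.sum_range_succ, ← ih]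
    generalize (∑ i ∈ Finset.range K, i) = A
    generalize (∑ i ∈ Finset.range M, i) = B
    generalize K * M = T
    omega

lemma gauss (hkm : k + m = n) :
    (∑ i : Fin k, (i : ℕ)) + (∑ i : Fin m, (i : ℕ)) + k * m = ∑ i : Fin n, (i : ℕ) := by
  rw [Fin.sum_univ_eq_sum_range (fun i => i), Fin.sum_univ_eq_sum_range (fun i => i),
    Fin.sum_univ_eq_sum_range (fun i => i), ← hkm]
  exact gauss_aux k m

lemma totalDegree_Apoly (hkm : k + m = n) (e : (Fin k ⊕ Fin m) ≃ Fin n)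
    (P : MvPolynomial (Fin k) F) (Q : MvPolynomial (Fin m) F)
    (hdeg : P.totalDegree + Q.totalDegree ≤ k * m) :
    (Apoly e P Q).totalDegree ≤ ∑ i : Fin n, (i : ℕ) := by
  rw [Apoly]
  refine (totalDegree_finset_sum _ _).trans (Finset.sup_le ?_)
  intro σ _
  refine (totalDegree_smul_le _ _).trans ?_
  refine (totalDegree_rename_le _ _).trans ?_
  refine (totalDegree_rename_le _ _).trans ?_
  rw [Rpoly]
  have h1 := totalDegree_mul
    (rename Sum.inl P * rename Sum.inr Q * rename (Sum.inl (β := Fin m)) (VV F k))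
    (rename Sum.inr (VV F m))
  have h2 := totalDegree_mul (rename Sum.inl P * rename (Sum.inr (α := Fin k)) Q)
    (rename (Sum.inl (β := Fin m)) (VV F k))
  have h3 := totalDegree_mul (rename (Sum.inl (β := Fin m)) P)
    (rename (Sum.inr (α := Fin k)) Q)
  have h4 := totalDegree_rename_le (Sum.inl (β := Fin m)) P
  have h5 := totalDegree_rename_le (Sum.inr (α := Fin k)) Q
  have h6 := (totalDegree_rename_le (Sum.inl (β := Fin m)) (VV F k)).trans (totalDegree_VV k)
  have h7 := (totalDegree_rename_le (Sum.inr (α := Fin k)) (VV F m)).trans (totalDegree_VV m)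
  have hg := gauss (k := k) (m := m) hkm
  omega

lemma eval_Rpoly (P : MvPolynomial (Fin k) F) (Q : MvPolynomial (Fin m) F)
    (ν : Fin k ⊕ Fin m → F) :
    eval ν (Rpoly P Q) = (eval (ν ∘ Sum.inl) P * eval (ν ∘ Sum.inr) Q)
      * (eval (ν ∘ Sum.inl) (VV F k) * eval (ν ∘ Sum.inr) (VV F m)) := by
  rw [Rpoly]
  simp only [map_mul, eval_rename]
  ring

lemma eval_Rpoly_perm (P : MvPolynomial (Fin k) F) (Q : MvPolynomial (Fin m) F)
    (hP : P.IsSymmetric) (hQ : Q.IsSymmetric) (ν : Fin k ⊕ Fin m → F)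
    (τ : Equiv.Perm (Fin k)) (ρ : Equiv.Perm (Fin m)) :
    eval (ν ∘ ⇑(Equiv.sumCongr τ ρ)) (Rpoly P Q)
      = (sgn F τ * sgn F ρ) * eval ν (Rpoly P Q) := by
  rw [eval_Rpoly, eval_Rpoly]
  have h1 : (ν ∘ ⇑(Equiv.sumCongr τ ρ)) ∘ Sum.inl = (ν ∘ Sum.inl) ∘ ⇑τ :=
    funext fun a => by simp
  have h2 : (ν ∘ ⇑(Equiv.sumCongr τ ρ)) ∘ Sum.inr = (ν ∘ Sum.inr) ∘ ⇑ρ :=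
    funext fun b => by simp
  rw [h1, h2]
  have hP' : eval ((ν ∘ Sum.inl) ∘ ⇑τ) P = eval (ν ∘ Sum.inl) P := by
    rw [← eval_rename, hP τ]
  have hQ' : eval ((ν ∘ Sum.inr) ∘ ⇑ρ) Q = eval (ν ∘ Sum.inr) Q := by
    rw [← eval_rename, hQ ρ]
  have hV1 : eval ((ν ∘ Sum.inl) ∘ ⇑τ) (VV F k) = sgn F τ * eval (ν ∘ Sum.inl) (VV F k) := by
    rw [← eval_rename, rename_VV, smul_eval]
  have hV2 : eval ((ν ∘ Sum.inr) ∘ ⇑ρ) (VV F m) = sgn F ρ * eval (ν ∘ Sum.inr) (VV F m) := by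
    rw [← eval_rename, rename_VV, smul_eval]
  rw [hP', hQ', hV1, hV2]
  ring

lemma eval_Apoly (hkm : k + m = n) (e : (Fin k ⊕ Fin m) ≃ Fin n)
    (P : MvPolynomial (Fin k) F) (Q : MvPolynomial (Fin m) F)
    (hP : P.IsSymmetric) (hQ : Q.IsSymmetric) (lam : Fin n → F) :
    eval lam (Apoly e P Q)
      = (k.factorial : F) * (m.factorial : F) *
          ∑ I : {s : Finset (Fin n) // s.card = k},
            sgn F (Phi hkm e (I, 1, 1)) *
              eval (fun y => lam (uI hkm I y)) (Rpoly P Q) := by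
  rw [Apoly, map_sum]
  have hterm : ∀ σ : Equiv.Perm (Fin n),
      eval lam (sgn F σ • rename ⇑σ (rename ⇑e (Rpoly P Q)))
        = sgn F σ * eval ((lam ∘ ⇑σ) ∘ ⇑e) (Rpoly P Q) := by
    intro σ
    rw [smul_eval, eval_rename, eval_rename]
  rw [Finset.sum_congr rfl (fun σ _ => hterm σ)]
  rw [← Equiv.sum_comp (Equiv.ofBijective _ (Phi_bijective hkm e))
    (fun σ => sgn F σ * eval ((lam ∘ ⇑σ) ∘ ⇑e) (Rpoly P Q))]
  simp only [Equiv.ofBijective_apply]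
  rw [Fintype.sum_prod_type]
  rw [Finset.mul_sum]
  apply Finset.sum_congr rfl
  intro I _
  rw [Fintype.sum_prod_type]
  have hper : ∀ (τ : Equiv.Perm (Fin k)) (ρ : Equiv.Perm (Fin m)),
      sgn F (Phi hkm e (I, τ, ρ)) * eval ((lam ∘ ⇑(Phi hkm e (I, τ, ρ))) ∘ ⇑e) (Rpoly P Q)
        = sgn F (Phi hkm e (I, 1, 1)) * eval (fun y => lam (uI hkm I y)) (Rpoly P Q) := by
    intro τ ρ
    have hcomp : (lam ∘ ⇑(Phi hkm e (I, τ, ρ))) ∘ ⇑e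
        = (fun y => lam (uI hkm I y)) ∘ ⇑(Equiv.sumCongr τ ρ) := by
      funext y
      simp [Phi]
    rw [hcomp, eval_Rpoly_perm P Q hP hQ, sgn_Phi]
    have hτ := sgn_mul_self F τ
    have hρ := sgn_mul_self F ρ
    linear_combination (sgn F (Phi hkm e (I, 1, 1)) * eval (fun y => lam (uI hkm I y))
        (Rpoly P Q) * (sgn F τ * sgn F τ)) * hρ
      + (sgn F (Phi hkm e (I, 1, 1)) * eval (fun y => lam (uI hkm I y)) (Rpoly P Q)) * hτ
  rw [Finset.sum_congr rfl (fun τ _ => Finset.sum_congr rfl (fun ρ _ => hper τ ρ))]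
  simp only [Finset.sum_const, Finset.card_univ, Fintype.card_perm, Fintype.card_fin,
    smul_smul, nsmul_eq_mul]
  push_cast
  ring

lemma eval_VV_if (μ : Fin n → F) :
    eval μ (VV F n) = ∏ i : Fin n, ∏ j : Fin n, if i < j then (μ j - μ i) else 1 := by
  rw [eval_VV, prod_Ioi_eq_prod_if]

lemma prod_emb {s : Finset (Fin n)} {k : ℕ} (h : s.card = k) (g : Fin n → F) :
    (∏ a : Fin k, g (s.orderEmbOfFin h a)) = ∏ x ∈ s, g x := by
  apply Finset.prod_nbij (fun a => s.orderEmbOfFin h a)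
  · intro a _
    exact Finset.orderEmbOfFin_mem s h a
  · intro a _ b _ hab
    exact (s.orderEmbOfFin h).injective hab
  · intro x hx
    have hx' : x ∈ (↑s : Set (Fin n)) := hx
    rw [← s.range_orderEmbOfFin h] at hx'
    obtain ⟨a, ha⟩ := hx'
    exact ⟨a, by simp, ha⟩
  · intro a _
    rfl

lemma eval_VVn_split (hkm : k + m = n) (e : (Fin k ⊕ Fin m) ≃ Fin n)
    (hvl : ∀ a : Fin k, ((e (Sum.inl a)) : ℕ) = (a : ℕ))
    (hvr : ∀ b : Fin m, ((e (Sum.inr b)) : ℕ) = k + (b : ℕ))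
    (I : {s : Finset (Fin n) // s.card = k}) (lam : Fin n → F) :
    eval lam (VV F n)
      = sgn F (Phi hkm e (I, 1, 1)) *
          ((eval (fun a => lam (I.1.orderEmbOfFin I.2 a)) (VV F k)
            * eval (fun b => lam (I.1ᶜ.orderEmbOfFin (compl_card hkm I) b)) (VV F m))
          * ((-1 : F) ^ (k * m) * ∏ i ∈ I.1, ∏ j ∈ I.1ᶜ, (lam i - lam j))) := by
  set Φ₀ := Phi hkm e (I, 1, 1) with hΦ₀
  have h0 : eval (lam ∘ ⇑Φ₀) (VV F n) = sgn F Φ₀ * eval lam (VV F n) := by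
    rw [← eval_rename, rename_VV, smul_eval]
  have h1 : eval (lam ∘ ⇑Φ₀) (VV F n)
      = ∏ i : Fin n, ∏ j : Fin n, if i < j then (lam (Φ₀ j) - lam (Φ₀ i)) else 1 :=
    eval_VV_if _
  rw [split_prod e hvl hvr (fun i j => lam (Φ₀ j) - lam (Φ₀ i))] at h1
  have hinl : ∀ a : Fin k, Φ₀ (e (Sum.inl a)) = I.1.orderEmbOfFin I.2 a := by
    intro a
    rw [hΦ₀, Phi_apply_inl]
    simp
  have hinr : ∀ b : Fin m, Φ₀ (e (Sum.inr b)) = I.1ᶜ.orderEmbOfFin (compl_card hkm I) b := by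
    intro b
    rw [hΦ₀, Phi_apply_inr]
    simp
  simp only [hinl, hinr] at h1
  have hB1 : (∏ a : Fin k, ∏ b : Fin k,
      if a < b then (lam (I.1.orderEmbOfFin I.2 b) - lam (I.1.orderEmbOfFin I.2 a)) else 1)
      = eval (fun a => lam (I.1.orderEmbOfFin I.2 a)) (VV F k) := (eval_VV_if _).symm
  have hB2 : (∏ a : Fin m, ∏ b : Fin m,
      if a < b then (lam (I.1ᶜ.orderEmbOfFin (compl_card hkm I) b)
        - lam (I.1ᶜ.orderEmbOfFin (compl_card hkm I) a)) else 1)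
      = eval (fun b => lam (I.1ᶜ.orderEmbOfFin (compl_card hkm I) b)) (VV F m) :=
    (eval_VV_if _).symm
  have hB3 : (∏ a : Fin k, ∏ b : Fin m,
      (lam (I.1ᶜ.orderEmbOfFin (compl_card hkm I) b) - lam (I.1.orderEmbOfFin I.2 a)))
      = (-1 : F) ^ (k * m) * ∏ i ∈ I.1, ∏ j ∈ I.1ᶜ, (lam i - lam j) := by
    have hpt : ∀ (a : Fin k) (b : Fin m),
        (lam (I.1ᶜ.orderEmbOfFin (compl_card hkm I) b) - lam (I.1.orderEmbOfFin I.2 a))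
          = (-1) * (lam (I.1.orderEmbOfFin I.2 a)
              - lam (I.1ᶜ.orderEmbOfFin (compl_card hkm I) b)) := by
      intro a b
      ring
    rw [Finset.prod_congr rfl (fun a _ => Finset.prod_congr rfl (fun b _ => hpt a b))]
    rw [Finset.prod_congr rfl (fun a (_ : a ∈ Finset.univ) => Finset.prod_mul_distrib)]
    rw [Finset.prod_mul_distrib]
    have hc : (∏ _a : Fin k, ∏ _b : Fin m, (-1 : F)) = (-1 : F) ^ (k * m) := by
      rw [Finset.prod_const, Finset.prod_const, Finset.card_univ, Finset.card_univ,
        Fintype.card_fin, Fintype.card_fin, ← pow_mul, Nat.mul_comm]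
    rw [hc]
    congr 1
    rw [Finset.prod_congr rfl (fun x (_ : x ∈ Finset.univ) =>
      prod_emb (compl_card hkm I) (fun j => lam (I.1.orderEmbOfFin I.2 x) - lam j))]
    exact prod_emb I.2 (fun i => ∏ j ∈ I.1ᶜ, (lam i - lam j))
  rw [hB1, hB2, hB3] at h1
  rw [h0] at h1
  have hs := sgn_mul_self F Φ₀
  linear_combination (sgn F Φ₀) * h1 - (eval lam (VV F n)) * hs

lemma eval_VV_ne_zero (lam : Fin n → F) (hlam : Function.Injective lam) :
    eval lam (VV F n) ≠ 0 := by
  rw [eval_VV]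
  rw [Finset.prod_ne_zero_iff]
  intro i _
  rw [Finset.prod_ne_zero_iff]
  intro j hj
  rw [Finset.mem_Ioi] at hj
  exact sub_ne_zero.2 (fun h => absurd (hlam h) (by intro h2; rw [h2] at hj; exact lt_irrefl i hj))

lemma D_ne_zero (lam : Fin n → F) (hlam : Function.Injective lam)
    (I : {s : Finset (Fin n) // s.card = k}) :
    (∏ i ∈ I.1, ∏ j ∈ I.1ᶜ, (lam i - lam j)) ≠ 0 := by
  rw [Finset.prod_ne_zero_iff]
  intro i hi
  rw [Finset.prod_ne_zero_iff]
  intro j hj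
  rw [Finset.mem_compl] at hj
  exact sub_ne_zero.2 (fun h => hj (hlam h ▸ hi))

-- ## coefficient chain
lemma Dmon_one (n : ℕ) : Dmon n 1 = dl n := by
  ext i
  simp

lemma coeff_dl_Apoly (e : (Fin k ⊕ Fin m) ≃ Fin n) (P : MvPolynomial (Fin k) F)
    (Q : MvPolynomial (Fin m) F) :
    coeff (dl n) (Apoly e P Q)
      = ∑ σ : Equiv.Perm (Fin n), sgn F σ * coeff (Dmon n σ) (rename ⇑e (Rpoly P Q)) := by
  rw [Apoly]
  rw [← Equiv.sum_comp (Equiv.inv (Equiv.Perm (Fin n)))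
    (fun σ => sgn F σ • rename ⇑σ (rename ⇑e (Rpoly P Q)))]
  rw [coeff_sum]
  apply Finset.sum_congr rfl
  intro σ _
  simp only [Equiv.inv_apply]
  rw [coeff_smul, smul_eq_mul, sgn_inv]
  congr 1
  have h1 := coeff_rename_mapDomain (⇑σ⁻¹) (Equiv.injective _) (rename ⇑e (Rpoly P Q)) (Dmon n σ)
  have h2 : Finsupp.mapDomain (⇑σ⁻¹) (Dmon n σ) = dl n := by
    rw [Dmon, ← Finsupp.mapDomain_comp]
    have h3 : (⇑σ⁻¹ ∘ ⇑σ) = id := by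
      funext x
      simp
    rw [h3, Finsupp.mapDomain_id]
  rw [h2] at h1
  exact h1

def nb (n : ℕ) : Fin n →₀ ℕ := Finsupp.equivFunOnFinite.symm (fun _ => n - 1)

@[simp] lemma nb_apply (n : ℕ) (i : Fin n) : nb n i = n - 1 := rfl

lemma Dmon_le_nb (n : ℕ) (σ : Equiv.Perm (Fin n)) : Dmon n σ ≤ nb n := by
  rw [Finsupp.le_def]
  intro i
  have := (σ⁻¹ i).isLt
  simp only [Dmon_apply, nb_apply]
  omega

lemma nb_sub_Dmon (n : ℕ) (σ : Equiv.Perm (Fin n)) :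
    nb n - Dmon n σ = Dmon n (σ * Fin.revPerm) := by
  ext i
  rw [Finsupp.tsub_apply]
  simp only [Dmon_apply, nb_apply]
  have h1 : ((σ * Fin.revPerm)⁻¹ : Equiv.Perm (Fin n)) i = Fin.rev (σ⁻¹ i) := rfl
  rw [h1, Fin.val_rev]
  have := (σ⁻¹ i).isLt
  omega

lemma coeff_nb_mul_VV (B : MvPolynomial (Fin n) F) :
    coeff (nb n) (B * VV F n)
      = sgn F (Fin.revPerm : Equiv.Perm (Fin n))
          * ∑ σ : Equiv.Perm (Fin n), sgn F σ * coeff (Dmon n σ) B := by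
  rw [VV, Finset.mul_sum, coeff_sum]
  have hterm : ∀ σ : Equiv.Perm (Fin n),
      coeff (nb n) (B * monomial (Dmon n σ) (sgn F σ))
        = sgn F σ * coeff (Dmon n (σ * Fin.revPerm)) B := by
    intro σ
    rw [coeff_mul_monomial', if_pos (Dmon_le_nb n σ), nb_sub_Dmon]
    ring
  rw [Finset.sum_congr rfl (fun σ _ => hterm σ)]
  rw [Finset.mul_sum]
  rw [← Equiv.sum_comp (Equiv.mulRight (Fin.revPerm : Equiv.Perm (Fin n)))
    (fun σ => sgn F (Fin.revPerm : Equiv.Perm (Fin n)) * (sgn F σ * coeff (Dmon n σ) B))]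
  apply Finset.sum_congr rfl
  intro σ _
  simp only [Equiv.coe_mulRight]
  rw [sgn_mul]
  have hs := sgn_mul_self F (Fin.revPerm : Equiv.Perm (Fin n))
  set x := coeff (Dmon n (σ * Fin.revPerm)) B
  linear_combination (-(sgn F σ * x)) * hs

lemma sgn_revPerm_eq_SK (n : ℕ) :
    sgn F (Fin.revPerm : Equiv.Perm (Fin n)) = SK F n := by
  set μ0 : Fin n → F := fun i => ((i : ℕ) : F) with hμ0
  have hinj : Function.Injective μ0 := by
    intro a b hab
    have : ((a : ℕ) : F) = ((b : ℕ) : F) := hab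
    exact Fin.val_injective (Nat.cast_injective this)
  have h0 : eval (μ0 ∘ ⇑(Fin.revPerm : Equiv.Perm (Fin n))) (VV F n)
      = sgn F (Fin.revPerm : Equiv.Perm (Fin n)) * eval μ0 (VV F n) := by
    rw [← eval_rename, rename_VV, smul_eval]
  have hpt : ∀ i j : Fin n, μ0 (Fin.revPerm j) - μ0 (Fin.revPerm i)
      = (-1) * (μ0 j - μ0 i) := by
    intro i j
    have hi := i.isLt
    have hj := j.isLt
    simp only [hμ0, Fin.revPerm_apply, Fin.val_rev]
    have h1 : ((n - ((j : ℕ) + 1) : ℕ) : F) = (n : F) - ((j : ℕ) : F) - 1 := by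
      push_cast [Nat.cast_sub (by omega : (j : ℕ) + 1 ≤ n)]
      ring
    have h2 : ((n - ((i : ℕ) + 1) : ℕ) : F) = (n : F) - ((i : ℕ) : F) - 1 := by
      push_cast [Nat.cast_sub (by omega : (i : ℕ) + 1 ≤ n)]
      ring
    rw [h1, h2]
    ring
  have h1 : eval (μ0 ∘ ⇑(Fin.revPerm : Equiv.Perm (Fin n))) (VV F n)
      = SK F n * eval μ0 (VV F n) := by
    rw [eval_VV_if, eval_VV_if, SK, ← Finset.prod_mul_distrib]
    rw [Finset.prod_congr rfl (fun i _ => (Finset.prod_mul_distrib).symm)]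
    apply Finset.prod_congr rfl
    intro i _
    apply Finset.prod_congr rfl
    intro j _
    rw [show (μ0 ∘ ⇑(Fin.revPerm : Equiv.Perm (Fin n))) j
        - (μ0 ∘ ⇑(Fin.revPerm : Equiv.Perm (Fin n))) i = (-1) * (μ0 j - μ0 i) from hpt i j]
    split
    · ring
    · ring
  have hne := eval_VV_ne_zero μ0 hinj
  have h3 := h0.symm.trans h1
  exact mul_right_cancel₀ hne h3

def Spoly (P : MvPolynomial (Fin k) F) (Q : MvPolynomial (Fin m) F) :
    MvPolynomial (Fin k ⊕ Fin m) F :=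
  (rename Sum.inl P) * (rename Sum.inr Q) *
    (∏ i : Fin k, ∏ j ∈ Finset.univ.erase i, (X (Sum.inl i) - X (Sum.inl j))) *
    (∏ i : Fin m, ∏ j ∈ Finset.univ.erase i, (X (Sum.inr i) - X (Sum.inr j))) *
    ∏ i : Fin m, ∏ j : Fin k, (X (Sum.inr i) - X (Sum.inl j))

lemma Spoly_eq (hkm : k + m = n) (e : (Fin k ⊕ Fin m) ≃ Fin n)
    (hvl : ∀ a : Fin k, ((e (Sum.inl a)) : ℕ) = (a : ℕ))
    (hvr : ∀ b : Fin m, ((e (Sum.inr b)) : ℕ) = k + (b : ℕ))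
    (P : MvPolynomial (Fin k) F) (Q : MvPolynomial (Fin m) F) :
    Spoly P Q = (SK F k * SK F m) • (Rpoly P Q * rename ⇑e.symm (VV F n)) := by
  apply MvPolynomial.funext
  intro ν
  rw [smul_eval]
  have hL : eval ν (Spoly P Q)
      = (eval (ν ∘ Sum.inl) P) * (eval (ν ∘ Sum.inr) Q) *
        (∏ i : Fin k, ∏ j ∈ Finset.univ.erase i, (ν (Sum.inl i) - ν (Sum.inl j))) *
        (∏ i : Fin m, ∏ j ∈ Finset.univ.erase i, (ν (Sum.inr i) - ν (Sum.inr j))) *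
        ∏ i : Fin m, ∏ j : Fin k, (ν (Sum.inr i) - ν (Sum.inl j)) := by
    simp only [Spoly, map_mul, map_prod, map_sub, eval_X, eval_rename]
  rw [hL]
  rw [erase_prod (fun i => ν (Sum.inl i)), erase_prod (fun i => ν (Sum.inr i))]
  rw [show (∏ i : Fin m, ∏ j : Fin k, (ν (Sum.inr i) - ν (Sum.inl j)))
      = ∏ j : Fin k, ∏ i : Fin m, (ν (Sum.inr i) - ν (Sum.inl j)) from Finset.prod_comm]
  rw [map_mul, eval_Rpoly, eval_VV_if (ν ∘ Sum.inl), eval_VV_if (ν ∘ Sum.inr)]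
  have hRV : eval ν (rename ⇑e.symm (VV F n))
      = ((∏ a : Fin k, ∏ b : Fin k, if a < b then ((ν ∘ Sum.inl) b - (ν ∘ Sum.inl) a) else 1)
          * ∏ a : Fin m, ∏ b : Fin m, if a < b then ((ν ∘ Sum.inr) b - (ν ∘ Sum.inr) a) else 1)
        * ∏ a : Fin k, ∏ b : Fin m, ((ν ∘ Sum.inr) b - (ν ∘ Sum.inl) a) := by
    rw [eval_rename, eval_VV_if]
    rw [split_prod e hvl hvr (fun i j => (ν ∘ ⇑e.symm) j - (ν ∘ ⇑e.symm) i)]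
    simp only [Function.comp_apply, Equiv.symm_apply_apply]
  rw [hRV]
  simp only [Function.comp_apply]
  ring

lemma coeff_Spoly (hkm : k + m = n) (e : (Fin k ⊕ Fin m) ≃ Fin n)
    (hvl : ∀ a : Fin k, ((e (Sum.inl a)) : ℕ) = (a : ℕ))
    (hvr : ∀ b : Fin m, ((e (Sum.inr b)) : ℕ) = k + (b : ℕ))
    (P : MvPolynomial (Fin k) F) (Q : MvPolynomial (Fin m) F) :
    coeff (Finsupp.equivFunOnFinite.symm fun _ : Fin k ⊕ Fin m => n - 1) (Spoly P Q)
      = (-1 : F) ^ (k * m) * coeff (dl n) (Apoly e P Q) := by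
  rw [Spoly_eq hkm e hvl hvr P Q, coeff_smul]
  have hR : Rpoly P Q * rename ⇑e.symm (VV F n)
      = rename ⇑e.symm (rename ⇑e (Rpoly P Q) * VV F n) := by
    rw [map_mul, rename_rename]
    have h1 : ⇑e.symm ∘ ⇑e = id := by
      funext x
      simp
    rw [h1, rename_id, AlgHom.id_apply]
  rw [hR]
  have hco : coeff (Finsupp.equivFunOnFinite.symm fun _ : Fin k ⊕ Fin m => n - 1)
      (rename ⇑e.symm (rename ⇑e (Rpoly P Q) * VV F n))
      = coeff (nb n) (rename ⇑e (Rpoly P Q) * VV F n) := by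
    have h1 := coeff_rename_mapDomain ⇑e.symm (Equiv.injective _)
      (rename ⇑e (Rpoly P Q) * VV F n) (nb n)
    have h2 : Finsupp.mapDomain ⇑e.symm (nb n)
        = Finsupp.equivFunOnFinite.symm (fun _ : Fin k ⊕ Fin m => n - 1) := by
      ext x
      rw [Finsupp.mapDomain_equiv_apply]
      rfl
    rw [h2] at h1
    exact h1
  rw [hco, coeff_nb_mul_VV, sgn_revPerm_eq_SK, ← coeff_dl_Apoly]
  rw [SK_split e hvl hvr]
  rw [smul_eq_mul]
  set c := coeff (dl n) (Apoly e P Q)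
  set X := (-1 : F) ^ (k * m)
  have hk2 := SK_mul_SK (F := F) k
  have hm2 := SK_mul_SK (F := F) m
  linear_combination (X * c * SK F m * SK F m) * hk2 + (X * c) * hm2

end Main

end

end DSym

theorem sum_prod_symm_eval_div_prod {F : Type*} [Field F] [CharZero F]
    (n k : ℕ) (hk0 : 0 < k) (hk : k < n)
    (lam : Fin n → F) (hlam : Function.Injective lam)
    (P : MvPolynomial (Fin k) F) (hPsymm : P.IsSymmetric)
    (Q : MvPolynomial (Fin (n - k)) F) (hQsymm : Q.IsSymmetric)
    (hdeg : P.totalDegree + Q.totalDegree ≤ k * (n - k)) :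
    ∑ I : {s : Finset (Fin n) // s.card = k},
        (MvPolynomial.eval (fun i => lam ((I.1.orderIsoOfFin I.2) i : Fin n)) P) *
          (MvPolynomial.eval (fun j => lam ((I.1ᶜ.orderIsoOfFin
              (by simp [Finset.card_compl, I.2] : I.1ᶜ.card = n - k)) j : Fin n)) Q) /
          ∏ i ∈ I.1, ∏ j ∈ I.1ᶜ, (lam i - lam j) =
      (MvPolynomial.coeff
          (Finsupp.equivFunOnFinite.symm fun _ : Fin k ⊕ Fin (n - k) => n - 1)
          ((MvPolynomial.rename Sum.inl P) * (MvPolynomial.rename Sum.inr Q) *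
            (∏ i : Fin k, ∏ j ∈ Finset.univ.erase i, (X (Sum.inl i) - X (Sum.inl j))) *
            (∏ i : Fin (n - k), ∏ j ∈ Finset.univ.erase i, (X (Sum.inr i) - X (Sum.inr j))) *
            ∏ i : Fin (n - k), ∏ j : Fin k, (X (Sum.inr i) - X (Sum.inl j)))) /
        ((Nat.factorial k : F) * (Nat.factorial (n - k) : F)) := by
  classical
  have hkm : k + (n - k) = n := by omega
  set e : Fin k ⊕ Fin (n - k) ≃ Fin n := finSumFinEquiv.trans (finCongr hkm) with he
  have hvl : ∀ a : Fin k, ((e (Sum.inl a)) : ℕ) = (a : ℕ) := by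
    intro a; simp [he]
  have hvr : ∀ b : Fin (n - k), ((e (Sum.inr b)) : ℕ) = k + (b : ℕ) := by
    intro b; simp [he]
  set V := eval lam (DSym.VV F n) with hV
  have hVne : V ≠ 0 := DSym.eval_VV_ne_zero lam hlam
  set c := MvPolynomial.coeff (DSym.dl n) (DSym.Apoly e P Q) with hc
  have hAeq : DSym.Apoly e P Q = c • DSym.VV F n :=
    (DSym.anti_Apoly e P Q).eq_smul_VV (DSym.totalDegree_Apoly hkm e P Q hdeg)
  have hevalA : eval lam (DSym.Apoly e P Q) = c * V := by
    rw [hAeq, smul_eval]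
  have hEV := DSym.eval_Apoly hkm e P Q hPsymm hQsymm lam
  have hd : MvPolynomial.coeff
      (Finsupp.equivFunOnFinite.symm fun _ : Fin k ⊕ Fin (n - k) => n - 1)
      ((MvPolynomial.rename Sum.inl P) * (MvPolynomial.rename Sum.inr Q) *
        (∏ i : Fin k, ∏ j ∈ Finset.univ.erase i, (X (Sum.inl i) - X (Sum.inl j))) *
        (∏ i : Fin (n - k), ∏ j ∈ Finset.univ.erase i, (X (Sum.inr i) - X (Sum.inr j))) *
        (∏ i : Fin (n - k), ∏ j : Fin k, (X (Sum.inr i) - X (Sum.inl j))))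
      = (-1 : F) ^ (k * (n - k)) * c := DSym.coeff_Spoly hkm e hvl hvr P Q
  have key : ∀ (I : {s : Finset (Fin n) // s.card = k}) (pf : I.1ᶜ.card = n - k),
      (MvPolynomial.eval (fun i => lam ((I.1.orderIsoOfFin I.2) i : Fin n)) P) *
        (MvPolynomial.eval (fun j => lam ((I.1ᶜ.orderIsoOfFin pf) j : Fin n)) Q) /
        (∏ i ∈ I.1, ∏ j ∈ I.1ᶜ, (lam i - lam j))
      = DSym.sgn F (DSym.Phi hkm e (I, 1, 1))
          * eval (fun y => lam (DSym.uI hkm I y)) (DSym.Rpoly P Q)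
          * ((-1 : F) ^ (k * (n - k)) / V) := by
    intro I pf
    have h1 : (fun i => lam ((I.1.orderIsoOfFin I.2) i : Fin n))
        = fun a => lam (I.1.orderEmbOfFin I.2 a) := by
      funext a; rw [Finset.coe_orderIsoOfFin_apply]
    have h2 : (fun j => lam ((I.1ᶜ.orderIsoOfFin pf) j : Fin n))
        = fun b => lam (I.1ᶜ.orderEmbOfFin (DSym.compl_card hkm I) b) := by
      funext b; rw [Finset.coe_orderIsoOfFin_apply]
    rw [h1, h2]
    have hERp : eval (fun y => lam (DSym.uI hkm I y)) (DSym.Rpoly P Q)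
        = ((eval (fun a => lam (I.1.orderEmbOfFin I.2 a)) P
            * eval (fun b => lam (I.1ᶜ.orderEmbOfFin (DSym.compl_card hkm I) b)) Q)
          * (eval (fun a => lam (I.1.orderEmbOfFin I.2 a)) (DSym.VV F k)
            * eval (fun b => lam (I.1ᶜ.orderEmbOfFin (DSym.compl_card hkm I) b)) (DSym.VV F (n - k)))) := by
      have hν1 : ((fun y => lam (DSym.uI hkm I y)) ∘ Sum.inl)
          = fun a => lam (I.1.orderEmbOfFin I.2 a) := rfl
      have hν2 : ((fun y => lam (DSym.uI hkm I y)) ∘ Sum.inr)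
          = fun b => lam (I.1ᶜ.orderEmbOfFin (DSym.compl_card hkm I) b) := rfl
      rw [DSym.eval_Rpoly, hν1, hν2]
    have hsplit := DSym.eval_VVn_split hkm e hvl hvr I lam
    have hD := DSym.D_ne_zero lam hlam I
    rw [mul_div_assoc', div_eq_div_iff hD hVne, hERp]
    rw [← hV] at hsplit
    linear_combination (eval (fun a => lam (I.1.orderEmbOfFin I.2 a)) P
      * eval (fun b => lam (I.1ᶜ.orderEmbOfFin (DSym.compl_card hkm I) b)) Q) * hsplit
  refine Eq.trans (Finset.sum_congr rfl (fun I _ => key I _)) ?_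
  rw [← Finset.sum_mul, hd]
  have hsum : ((k.factorial : F) * ((n - k).factorial : F)) *
      (∑ I : {s : Finset (Fin n) // s.card = k},
        DSym.sgn F (DSym.Phi hkm e (I, 1, 1))
          * eval (fun y => lam (DSym.uI hkm I y)) (DSym.Rpoly P Q)) = c * V := by
    rw [← hEV, hevalA]
  have hfk : (k.factorial : F) ≠ 0 := Nat.cast_ne_zero.2 (Nat.factorial_ne_zero k)
  have hfm : ((n - k).factorial : F) ≠ 0 := Nat.cast_ne_zero.2 (Nat.factorial_ne_zero (n - k))
  field_simp
  linear_combination hsum
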